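/- Let T ⊂ {(r,z) ∈ ℝ² : r ≥ 0} be a triangle with edges E₁, E₂, E₃ and unit normals n_{E_a}, and let ψ_{E_a} be the local basis functions (modified Raviart–Thomas functions ψ^R for edges with exactly one endpoint on the axis {r = 0}, standard ψ^{RT0} otherwise), each normalized so that ∫_{E_a} ψ_{E_a} · n_{E_a} ds = 1. For a C¹ vector field w on a neighborhood of the closure of T, define the local interpolant I_T w := Σ_{a=1}^{3} ( ∫_{E_a} w · n_{E_a} ds ) ψ_{E_a}. Then the interpolant preserves the mean divergence: ∫_T div( I_T w ) dr dz = ∫_T div w dr dz. In particular, if ∫_T div w dr dz = 0, then ∫_T div( I_T w ) dr dz = 0. -/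

import Mathlib

open MeasureTheory
open scoped Classical

noncomputable section

/-- Partial derivatives of scalar functions on `ℝ²`. -/
def pdr (f : ℝ × ℝ → ℝ) (p : ℝ × ℝ) : ℝ := fderiv ℝ f p (1, 0)
def pdz (f : ℝ × ℝ → ℝ) (p : ℝ × ℝ) : ℝ := fderiv ℝ f p (0, 1)

/-- The divergence of a planar vector field. -/
def div2 (F : ℝ × ℝ → ℝ × ℝ) (p : ℝ × ℝ) : ℝ :=
  pdr (fun s => (F s).1) p + pdz (fun s => (F s).2) p

/-- The two-dimensional `curl` of a scalar function: `curl f = (∂_z f, −∂_r f)`. -/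
def curl2 (f : ℝ × ℝ → ℝ) (p : ℝ × ℝ) : ℝ × ℝ :=
  (fderiv ℝ f p (0, 1), -(fderiv ℝ f p (1, 0)))

/-- The Euclidean dot product on `ℝ²`. -/
def dot2 (a b : ℝ × ℝ) : ℝ := a.1 * b.1 + a.2 * b.2

/-- The arclength integral `∫_{[A,B]} f ds` over the segment from `A` to `B`. -/
def lineIntegral (f : ℝ × ℝ → ℝ) (A B : ℝ × ℝ) : ℝ :=
  Real.sqrt (dot2 (B - A) (B - A)) * ∫ t in (0:ℝ)..1, f (A + t • (B - A))

/-- The local basis function of the edge `E = [N_a, N_b]`: the modified Raviart–Thomas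
function `ψ_E^R` if exactly one endpoint of `E` lies on the axis `{r = 0}`, the standard
`ψ_E^{RT0}` otherwise. -/
def psiE (la lb : (ℝ × ℝ) →ᵃ[ℝ] ℝ) (Na Nb : ℝ × ℝ) : ℝ × ℝ → ℝ × ℝ :=
  if Na.1 = 0 ∧ Nb.1 ≠ 0 then fun p => (2 * lb p) • curl2 (fun q => la q) p
  else if Nb.1 = 0 ∧ Na.1 ≠ 0 then fun p => (2 * la p) • curl2 (fun q => lb q) p
  else fun p => (lb p) • curl2 (fun q => la q) p - (la p) • curl2 (fun q => lb q) p

def detv (p q : ℝ × ℝ) : ℝ := p.1 * q.2 - p.2 * q.1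

def Fflux (v : ℝ × ℝ → ℝ × ℝ) (A B : ℝ × ℝ) : ℝ :=
  ∫ t in (0:ℝ)..1, detv (v (A + t • (B - A))) (B - A)

lemma linmap_apply (L : (ℝ × ℝ) →ₗ[ℝ] ℝ) (q : ℝ × ℝ) :
    L q = q.1 * L (1, 0) + q.2 * L (0, 1) := by
  have hq : q = q.1 • ((1:ℝ), (0:ℝ)) + q.2 • ((0:ℝ), (1:ℝ)) := by ext <;> simp
  conv_lhs => rw [hq]
  rw [map_add, L.map_smul, L.map_smul, smul_eq_mul, smul_eq_mul]

lemma affine_apply (f : (ℝ × ℝ) →ᵃ[ℝ] ℝ) (q : ℝ × ℝ) :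
    f q = q.1 * f.linear (1, 0) + q.2 * f.linear (0, 1) + f 0 := by
  have h : f q - f 0 = f.linear (q - 0) := (f.linearMap_vsub q 0).symm
  rw [sub_zero] at h
  rw [← linmap_apply]; linarith

lemma affine_line (f : (ℝ × ℝ) →ᵃ[ℝ] ℝ) (A B : ℝ × ℝ) (t : ℝ) :
    f (A + t • (B - A)) = f A + t * (f B - f A) := by
  have h : f (A + t • (B - A)) - f A = f.linear (A + t • (B - A) - A) :=
    (f.linearMap_vsub _ A).symm
  have h2 : f B - f A = f.linear (B - A) := (f.linearMap_vsub B A).symm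
  rw [add_sub_cancel_left] at h
  rw [f.linear.map_smul, smul_eq_mul, ← h2] at h
  linarith

def linCL (a b : ℝ) : (ℝ × ℝ) →L[ℝ] ℝ :=
  a • (ContinuousLinearMap.fst ℝ ℝ ℝ) + b • (ContinuousLinearMap.snd ℝ ℝ ℝ)

@[simp] lemma linCL_apply (a b : ℝ) (q : ℝ × ℝ) : linCL a b q = a * q.1 + b * q.2 := by
  simp [linCL]

lemma affine_hasFDerivAt (f : (ℝ × ℝ) →ᵃ[ℝ] ℝ) (p : ℝ × ℝ) :
    HasFDerivAt (⇑f) (linCL (f.linear (1, 0)) (f.linear (0, 1))) p := by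
  have hfe : (⇑f : ℝ × ℝ → ℝ) = fun q => f.linear (1,0) * q.1 + f.linear (0,1) * q.2 + f 0 := by
    funext q; rw [affine_apply]; ring
  rw [hfe]
  have h1 : HasFDerivAt (fun q : ℝ × ℝ => f.linear (1,0) * q.1 + f.linear (0,1) * q.2)
      (linCL (f.linear (1, 0)) (f.linear (0, 1))) p := by
    exact ((hasFDerivAt_fst.const_mul _).add (hasFDerivAt_snd.const_mul _))
  exact h1.add_const _

lemma affine_contDiff (f : (ℝ × ℝ) →ᵃ[ℝ] ℝ) : ContDiff ℝ 1 ⇑f := by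
  have hfe : (⇑f : ℝ × ℝ → ℝ) = fun q => f.linear (1,0) * q.1 + f.linear (0,1) * q.2 + f 0 := by
    funext q; rw [affine_apply]; ring
  rw [hfe]
  exact (((contDiff_const.mul contDiff_fst).add (contDiff_const.mul contDiff_snd)).add contDiff_const)

def Kvec (f : (ℝ × ℝ) →ᵃ[ℝ] ℝ) : ℝ × ℝ := (f.linear (0,1), -(f.linear (1,0)))

lemma curl2_affine (f : (ℝ × ℝ) →ᵃ[ℝ] ℝ) (p : ℝ × ℝ) :
    curl2 (fun q => f q) p = Kvec f := by
  unfold curl2 Kvec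
  rw [(affine_hasFDerivAt f p).fderiv]
  simp

lemma Kdet (f : (ℝ × ℝ) →ᵃ[ℝ] ℝ) (q : ℝ × ℝ) : detv (Kvec f) q = f.linear q := by
  unfold detv Kvec
  rw [linmap_apply f.linear q]
  ring

lemma psi_repr (la lb : (ℝ × ℝ) →ᵃ[ℝ] ℝ) (Na Nb : ℝ × ℝ) :
    ∃ c1 c2 : ℝ, psiE la lb Na Nb
      = fun p => (c1 * lb p) • Kvec la + (c2 * la p) • Kvec lb := by
  unfold psiE
  split_ifs with h1 h2
  · exact ⟨2, 0, by funext p; rw [curl2_affine]; simp⟩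
  · exact ⟨0, 2, by funext p; rw [curl2_affine]; simp⟩
  · refine ⟨1, -1, by funext p; rw [curl2_affine, curl2_affine]; simp [sub_eq_add_neg]⟩

lemma psiE_contDiff (la lb : (ℝ × ℝ) →ᵃ[ℝ] ℝ) (Na Nb : ℝ × ℝ) :
    ContDiff ℝ 1 (psiE la lb Na Nb) := by
  obtain ⟨c1, c2, hrep⟩ := psi_repr la lb Na Nb
  rw [hrep]
  exact (((contDiff_const.mul (affine_contDiff lb)).smul contDiff_const).add
    ((contDiff_const.mul (affine_contDiff la)).smul contDiff_const))

lemma Fflux_pair (f g : ℝ × ℝ → ℝ) (hf : Continuous f) (hg : Continuous g)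
    (K K' A B : ℝ × ℝ) :
    Fflux (fun p => f p • K + g p • K') A B
      = (∫ t in (0:ℝ)..1, f (A + t • (B - A))) * detv K (B - A)
        + (∫ t in (0:ℝ)..1, g (A + t • (B - A))) * detv K' (B - A) := by
  unfold Fflux
  have h : ∀ t : ℝ, detv ((fun p => f p • K + g p • K') (A + t • (B - A))) (B - A)
      = f (A + t • (B - A)) * detv K (B - A) + g (A + t • (B - A)) * detv K' (B - A) := by
    intro t
    simp only [detv, Prod.fst_add, Prod.snd_add, Prod.smul_fst, Prod.smul_snd, smul_eq_mul]
    ring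
  rw [intervalIntegral.integral_congr (fun t _ => h t)]
  have hline : Continuous (fun t : ℝ => A + t • (B - A)) := by fun_prop
  have i1 : IntervalIntegrable (fun t : ℝ => f (A + t • (B - A)) * detv K (B - A)) volume 0 1 :=
    Continuous.intervalIntegrable ((hf.comp hline).mul continuous_const) 0 1
  have i2 : IntervalIntegrable (fun t : ℝ => g (A + t • (B - A)) * detv K' (B - A)) volume 0 1 :=
    Continuous.intervalIntegrable ((hg.comp hline).mul continuous_const) 0 1
  rw [intervalIntegral.integral_add i1 i2]
  rw [intervalIntegral.integral_mul_const, intervalIntegral.integral_mul_const]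

def Tref : Set (ℝ × ℝ) := {p | 0 ≤ p.1 ∧ 0 ≤ p.2 ∧ p.1 + p.2 ≤ 1}

lemma isClosed_Tref : IsClosed Tref := by
  have : Tref = {p : ℝ × ℝ | 0 ≤ p.1} ∩ ({p | 0 ≤ p.2} ∩ {p | p.1 + p.2 ≤ 1}) := by
    ext p; simp [Tref, and_assoc]
  rw [this]
  exact (isClosed_le continuous_const continuous_fst).inter
    ((isClosed_le continuous_const continuous_snd).inter
      (isClosed_le (continuous_fst.add continuous_snd) continuous_const))

lemma measurableSet_Tref : MeasurableSet Tref := isClosed_Tref.measurableSet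

lemma convex_Tref : Convex ℝ Tref := by
  intro x hx y hy a b ha hb hab
  obtain ⟨hx1, hx2, hx3⟩ := hx; obtain ⟨hy1, hy2, hy3⟩ := hy
  refine ⟨?_, ?_, ?_⟩ <;> simp [Prod.smul_fst, Prod.smul_snd, smul_eq_mul] <;> nlinarith

lemma Tref_hull : convexHull ℝ {((0:ℝ),(0:ℝ)), ((1:ℝ),(0:ℝ)), ((0:ℝ),(1:ℝ))} = Tref := by
  apply le_antisymm
  · apply convexHull_min _ convex_Tref
    intro p hp
    rcases hp with rfl | rfl | rfl <;> norm_num [Tref]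
  · intro p hp
    obtain ⟨h1, h2, h3⟩ := hp
    have := (convex_convexHull ℝ ({((0:ℝ),(0:ℝ)), ((1:ℝ),(0:ℝ)), ((0:ℝ),(1:ℝ))} : Set (ℝ×ℝ))).sum_mem
      (t := (Finset.univ : Finset (Fin 3))) (w := ![1 - p.1 - p.2, p.1, p.2])
      (z := ![((0:ℝ),(0:ℝ)), ((1:ℝ),(0:ℝ)), ((0:ℝ),(1:ℝ))]) ?_ ?_ ?_
    · convert this using 1
      simp [Fin.sum_univ_three]
    · intro i _; fin_cases i <;> simp <;> linarith
    · simp [Fin.sum_univ_three]; ring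
    · intro i _; fin_cases i <;> exact subset_convexHull ℝ _ (by norm_num)

lemma isCompact_Tref : IsCompact Tref := by
  rw [← Tref_hull]
  exact (((Set.finite_singleton _).insert _).insert _).isCompact_convexHull ℝ

lemma pdr_continuousOn (U : Set (ℝ × ℝ)) (hU : IsOpen U) (v1 : ℝ × ℝ → ℝ)
    (hv1 : ContDiffOn ℝ 1 v1 U) : ContinuousOn (fun p => pdr v1 p) U := by
  have h := hv1.continuousOn_fderiv_of_isOpen hU le_rfl
  exact (ContinuousLinearMap.apply ℝ ℝ (((1:ℝ),(0:ℝ)))).continuous.comp_continuousOn h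

lemma pdz_continuousOn (U : Set (ℝ × ℝ)) (hU : IsOpen U) (v1 : ℝ × ℝ → ℝ)
    (hv1 : ContDiffOn ℝ 1 v1 U) : ContinuousOn (fun p => pdz v1 p) U := by
  have h := hv1.continuousOn_fderiv_of_isOpen hU le_rfl
  exact (ContinuousLinearMap.apply ℝ ℝ (((0:ℝ),(1:ℝ)))).continuous.comp_continuousOn h

lemma part_r (U : Set (ℝ × ℝ)) (hU : IsOpen U) (hTU : Tref ⊆ U) (v1 : ℝ × ℝ → ℝ)
    (hv1 : ContDiffOn ℝ 1 v1 U) :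
    ∫ p in Tref, pdr v1 p
      = (∫ y in (0:ℝ)..1, v1 (1 - y, y)) - ∫ y in (0:ℝ)..1, v1 (0, y) := by
  have hcont : ContinuousOn (fun p => pdr v1 p) U := pdr_continuousOn U hU v1 hv1
  have hInt : IntegrableOn (fun p => pdr v1 p) Tref :=
    (hcont.mono hTU).integrableOn_compact isCompact_Tref
  rw [← integral_indicator measurableSet_Tref]
  rw [Measure.volume_eq_prod]
  rw [integral_prod_symm _ (by
    rw [← Measure.volume_eq_prod]
    exact (integrable_indicator_iff measurableSet_Tref).2 hInt)]
  have key : ∀ y : ℝ, (∫ x : ℝ, Set.indicator Tref (fun p => pdr v1 p) (x, y))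
      = Set.indicator (Set.Icc (0:ℝ) 1) (fun y => v1 (1 - y, y) - v1 (0, y)) y := by
    intro y
    by_cases hy : y ∈ Set.Icc (0:ℝ) 1
    · have hind : (fun x => Set.indicator Tref (fun p => pdr v1 p) (x, y))
          = Set.indicator (Set.Icc 0 (1 - y)) (fun x => pdr v1 (x, y)) := by
        funext x
        by_cases hx : x ∈ Set.Icc (0:ℝ) (1 - y)
        · rw [Set.indicator_of_mem hx,
            Set.indicator_of_mem (show (x,y) ∈ Tref from ⟨hx.1, hy.1, by
              have := hx.2; simp only []; linarith⟩)]
        · rw [Set.indicator_of_notMem hx, Set.indicator_of_notMem (by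
            intro hm
            exact hx ⟨hm.1, by have := hm.2.2; linarith⟩)]
      have hle : (0:ℝ) ≤ 1 - y := by linarith [hy.2]
      rw [hind, integral_indicator measurableSet_Icc, integral_Icc_eq_integral_Ioc,
        ← intervalIntegral.integral_of_le hle]
      have hderiv : ∀ x ∈ Set.uIcc (0:ℝ) (1 - y),
          HasDerivAt (fun x => v1 (x, y)) (pdr v1 (x, y)) x := by
        intro x hx
        rw [Set.uIcc_of_le hle] at hx
        have hmem : (x, y) ∈ U := hTU ⟨hx.1, hy.1, by have := hx.2; simp only []; linarith⟩
        have hd : DifferentiableAt ℝ v1 (x, y) :=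
          (hv1.differentiableOn one_ne_zero).differentiableAt (hU.mem_nhds hmem)
        exact hd.hasFDerivAt.comp_hasDerivAt x ((hasDerivAt_id x).prodMk (hasDerivAt_const x y))
      have hii : IntervalIntegrable (fun x => pdr v1 (x, y)) volume 0 (1 - y) := by
        apply ContinuousOn.intervalIntegrable
        apply hcont.comp (Continuous.continuousOn (by continuity))
        intro x hx
        rw [Set.uIcc_of_le hle] at hx
        exact hTU ⟨hx.1, hy.1, by have := hx.2; simp only []; linarith⟩
      rw [intervalIntegral.integral_eq_sub_of_hasDerivAt hderiv hii, Set.indicator_of_mem hy]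
    · rw [Set.indicator_of_notMem hy]
      have hz : ∀ x : ℝ, Set.indicator Tref (fun p => pdr v1 p) (x, y) = 0 := by
        intro x
        apply Set.indicator_of_notMem
        intro hm
        simp only [Set.mem_Icc, not_and_or, not_le] at hy
        obtain ⟨h1, h2, h3⟩ := hm
        rcases hy with h | h
        · simp only [] at h1 h2 h3; linarith
        · simp only [] at h1 h2 h3; linarith
      simp only [hz, integral_zero]
  rw [funext key, integral_indicator measurableSet_Icc, integral_Icc_eq_integral_Ioc,
    ← intervalIntegral.integral_of_le zero_le_one]
  have hii1 : IntervalIntegrable (fun y => v1 (1 - y, y)) volume 0 1 := by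
    apply ContinuousOn.intervalIntegrable
    apply hv1.continuousOn.comp (Continuous.continuousOn (by continuity))
    intro y hy
    rw [Set.uIcc_of_le zero_le_one] at hy
    exact hTU ⟨by simp only []; linarith [hy.1, hy.2], by simp only []; linarith [hy.1], by simp only []; linarith⟩
  have hii2 : IntervalIntegrable (fun y => v1 (0, y)) volume 0 1 := by
    apply ContinuousOn.intervalIntegrable
    apply hv1.continuousOn.comp (Continuous.continuousOn (by continuity))
    intro y hy
    rw [Set.uIcc_of_le zero_le_one] at hy
    exact hTU ⟨le_refl 0, hy.1, by simp only []; linarith [hy.2]⟩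
  rw [intervalIntegral.integral_sub hii1 hii2]

lemma part_z (U : Set (ℝ × ℝ)) (hU : IsOpen U) (hTU : Tref ⊆ U) (v2 : ℝ × ℝ → ℝ)
    (hv2 : ContDiffOn ℝ 1 v2 U) :
    ∫ p in Tref, pdz v2 p
      = (∫ x in (0:ℝ)..1, v2 (x, 1 - x)) - ∫ x in (0:ℝ)..1, v2 (x, 0) := by
  have hcont : ContinuousOn (fun p => pdz v2 p) U := pdz_continuousOn U hU v2 hv2
  have hInt : IntegrableOn (fun p => pdz v2 p) Tref :=
    (hcont.mono hTU).integrableOn_compact isCompact_Tref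
  rw [← integral_indicator measurableSet_Tref]
  rw [Measure.volume_eq_prod]
  rw [integral_prod _ (by
    rw [← Measure.volume_eq_prod]
    exact (integrable_indicator_iff measurableSet_Tref).2 hInt)]
  have key : ∀ x : ℝ, (∫ y : ℝ, Set.indicator Tref (fun p => pdz v2 p) (x, y))
      = Set.indicator (Set.Icc (0:ℝ) 1) (fun x => v2 (x, 1 - x) - v2 (x, 0)) x := by
    intro x
    by_cases hx : x ∈ Set.Icc (0:ℝ) 1
    · have hind : (fun y => Set.indicator Tref (fun p => pdz v2 p) (x, y))
          = Set.indicator (Set.Icc 0 (1 - x)) (fun y => pdz v2 (x, y)) := by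
        funext y
        by_cases hy : y ∈ Set.Icc (0:ℝ) (1 - x)
        · rw [Set.indicator_of_mem hy,
            Set.indicator_of_mem (show (x,y) ∈ Tref from ⟨hx.1, hy.1, by
              have := hy.2; simp only []; linarith⟩)]
        · rw [Set.indicator_of_notMem hy, Set.indicator_of_notMem (by
            intro hm
            exact hy ⟨hm.2.1, by have := hm.2.2; linarith⟩)]
      have hle : (0:ℝ) ≤ 1 - x := by linarith [hx.2]
      rw [hind, integral_indicator measurableSet_Icc, integral_Icc_eq_integral_Ioc,
        ← intervalIntegral.integral_of_le hle]
      have hderiv : ∀ y ∈ Set.uIcc (0:ℝ) (1 - x),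
          HasDerivAt (fun y => v2 (x, y)) (pdz v2 (x, y)) y := by
        intro y hy
        rw [Set.uIcc_of_le hle] at hy
        have hmem : (x, y) ∈ U := hTU ⟨hx.1, hy.1, by have := hy.2; simp only []; linarith⟩
        have hd : DifferentiableAt ℝ v2 (x, y) :=
          (hv2.differentiableOn one_ne_zero).differentiableAt (hU.mem_nhds hmem)
        exact hd.hasFDerivAt.comp_hasDerivAt y ((hasDerivAt_const y x).prodMk (hasDerivAt_id y))
      have hii : IntervalIntegrable (fun y => pdz v2 (x, y)) volume 0 (1 - x) := by
        apply ContinuousOn.intervalIntegrable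
        apply hcont.comp (Continuous.continuousOn (by continuity))
        intro y hy
        rw [Set.uIcc_of_le hle] at hy
        exact hTU ⟨hx.1, hy.1, by have := hy.2; simp only []; linarith⟩
      rw [intervalIntegral.integral_eq_sub_of_hasDerivAt hderiv hii, Set.indicator_of_mem hx]
    · rw [Set.indicator_of_notMem hx]
      have hz : ∀ y : ℝ, Set.indicator Tref (fun p => pdz v2 p) (x, y) = 0 := by
        intro y
        apply Set.indicator_of_notMem
        intro hm
        simp only [Set.mem_Icc, not_and_or, not_le] at hx
        obtain ⟨h1, h2, h3⟩ := hm
        rcases hx with h | h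
        · simp only [] at h1 h2 h3; linarith
        · simp only [] at h1 h2 h3; linarith
      simp only [hz, integral_zero]
  rw [funext key, integral_indicator measurableSet_Icc, integral_Icc_eq_integral_Ioc,
    ← intervalIntegral.integral_of_le zero_le_one]
  have hii1 : IntervalIntegrable (fun x => v2 (x, 1 - x)) volume 0 1 := by
    apply ContinuousOn.intervalIntegrable
    apply hv2.continuousOn.comp (Continuous.continuousOn (by continuity))
    intro x hx
    rw [Set.uIcc_of_le zero_le_one] at hx
    exact hTU ⟨by simp only []; linarith [hx.1], by simp only []; linarith [hx.2], by simp only []; linarith⟩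
  have hii2 : IntervalIntegrable (fun x => v2 (x, 0)) volume 0 1 := by
    apply ContinuousOn.intervalIntegrable
    apply hv2.continuousOn.comp (Continuous.continuousOn (by continuity))
    intro x hx
    rw [Set.uIcc_of_le zero_le_one] at hx
    exact hTU ⟨hx.1, le_refl 0, by simp only []; linarith [hx.2]⟩
  rw [intervalIntegral.integral_sub hii1 hii2]

lemma refGreen (U : Set (ℝ × ℝ)) (hU : IsOpen U) (hTU : Tref ⊆ U) (v : ℝ × ℝ → ℝ × ℝ)
    (hv : ContDiffOn ℝ 1 v U) :
    ∫ p in Tref, div2 v p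
      = Fflux v (0,0) (1,0) + Fflux v (1,0) (0,1) + Fflux v (0,1) (0,0) := by
  have hv1 : ContDiffOn ℝ 1 (fun s => (v s).1) U := contDiff_fst.comp_contDiffOn hv
  have hv2 : ContDiffOn ℝ 1 (fun s => (v s).2) U := contDiff_snd.comp_contDiffOn hv
  have hI1 : IntegrableOn (fun p => pdr (fun s => (v s).1) p) Tref :=
    ((pdr_continuousOn U hU _ hv1).mono hTU).integrableOn_compact isCompact_Tref
  have hI2 : IntegrableOn (fun p => pdz (fun s => (v s).2) p) Tref :=
    ((pdz_continuousOn U hU _ hv2).mono hTU).integrableOn_compact isCompact_Tref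
  have hsplit : ∫ p in Tref, div2 v p
      = (∫ p in Tref, pdr (fun s => (v s).1) p) + ∫ p in Tref, pdz (fun s => (v s).2) p := by
    unfold div2
    exact integral_add hI1 hI2
  -- integrability of curve composites
  have hcurve : ∀ (g : ℝ → ℝ × ℝ), Continuous g → (∀ t ∈ Set.Icc (0:ℝ) 1, g t ∈ Tref) →
      ∀ (c : ℝ × ℝ → ℝ), Continuous c →
      IntervalIntegrable (fun t => c (v (g t))) volume 0 1 := by
    intro g hg hmem c hc
    apply ContinuousOn.intervalIntegrable
    apply hc.comp_continuousOn
    apply hv.continuousOn.comp hg.continuousOn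
    intro t ht
    rw [Set.uIcc_of_le zero_le_one] at ht
    exact hTU (hmem t ht)
  have hg1 : Continuous (fun t : ℝ => ((t, 0) : ℝ × ℝ)) := by fun_prop
  have hg2 : Continuous (fun t : ℝ => ((1 - t, t) : ℝ × ℝ)) := by fun_prop
  have hg3 : Continuous (fun t : ℝ => ((0, 1 - t) : ℝ × ℝ)) := by fun_prop
  have hm1 : ∀ t ∈ Set.Icc (0:ℝ) 1, ((t, 0) : ℝ × ℝ) ∈ Tref := by
    intro t ht; exact ⟨ht.1, le_refl 0, by simpa using ht.2⟩
  have hm2 : ∀ t ∈ Set.Icc (0:ℝ) 1, ((1 - t, t) : ℝ × ℝ) ∈ Tref := by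
    intro t ht; exact ⟨by simp only []; linarith [ht.2], ht.1, by simp only []; linarith⟩
  have hm3 : ∀ t ∈ Set.Icc (0:ℝ) 1, ((0, 1 - t) : ℝ × ℝ) ∈ Tref := by
    intro t ht; exact ⟨le_refl 0, by simp only []; linarith [ht.2], by simp only []; linarith [ht.1]⟩
  -- flux computations
  have hF1 : Fflux v (0,0) (1,0) = - ∫ t in (0:ℝ)..1, (v (t, 0)).2 := by
    unfold Fflux detv
    rw [← intervalIntegral.integral_neg]
    apply intervalIntegral.integral_congr
    intro t ht
    have hpt : ((0,0) : ℝ × ℝ) + t • (((1,0) : ℝ × ℝ) - (0,0)) = (t, 0) := by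
      ext <;> simp
    simp only [hpt, Prod.mk_sub_mk]
    norm_num [show (1:ℝ) + -t = 1 - t by ring]
  have hF2 : Fflux v (1,0) (0,1)
      = (∫ t in (0:ℝ)..1, (v (1 - t, t)).1) + ∫ t in (0:ℝ)..1, (v (1 - t, t)).2 := by
    unfold Fflux detv
    rw [← intervalIntegral.integral_add (hcurve _ hg2 hm2 _ continuous_fst)
      (hcurve _ hg2 hm2 _ continuous_snd)]
    apply intervalIntegral.integral_congr
    intro t ht
    have hpt : ((1,0) : ℝ × ℝ) + t • (((0,1) : ℝ × ℝ) - (1,0)) = (1 - t, t) := by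
      ext <;> simp <;> ring
    simp only [hpt, Prod.mk_sub_mk]
    norm_num [show (1:ℝ) + -t = 1 - t by ring]
  have hF3 : Fflux v (0,1) (0,0) = - ∫ t in (0:ℝ)..1, (v (0, 1 - t)).1 := by
    unfold Fflux detv
    rw [← intervalIntegral.integral_neg]
    apply intervalIntegral.integral_congr
    intro t ht
    have hpt : ((0,1) : ℝ × ℝ) + t • (((0,0) : ℝ × ℝ) - (0,1)) = (0, 1 - t) := by
      ext <;> simp <;> ring
    simp only [hpt, Prod.mk_sub_mk]
    norm_num [show (1:ℝ) + -t = 1 - t by ring]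
  -- substitutions t ↦ 1 - t
  have hsub1 : (∫ t in (0:ℝ)..1, (v (0, 1 - t)).1) = ∫ y in (0:ℝ)..1, (v (0, y)).1 := by
    have := intervalIntegral.integral_comp_sub_left (a := (0:ℝ)) (b := 1)
      (fun y => (v (0, y)).1) 1
    simpa using this
  have hsub2 : (∫ x in (0:ℝ)..1, (v (x, 1 - x)).2) = ∫ t in (0:ℝ)..1, (v (1 - t, t)).2 := by
    have := intervalIntegral.integral_comp_sub_left (a := (0:ℝ)) (b := 1)
      (fun x => (v (x, 1 - x)).2) 1
    simp only [sub_sub_cancel] at this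
    norm_num at this
    exact this.symm
  rw [hsplit, part_r U hU hTU _ hv1, part_z U hU hTU _ hv2, hF1, hF2, hF3]
  rw [hsub2, ← hsub1]
  ring

lemma prod_decomp (q : ℝ × ℝ) : q = q.1 • ((1:ℝ), (0:ℝ)) + q.2 • ((0:ℝ), (1:ℝ)) := by
  ext <;> simp

lemma green_pos (P0 P1 P2 : ℝ × ℝ)
    (hd : 0 < detv (P1 - P0) (P2 - P0))
    (U : Set (ℝ × ℝ)) (hU : IsOpen U)
    (hTU : convexHull ℝ {P0, P1, P2} ⊆ U)
    (v : ℝ × ℝ → ℝ × ℝ) (hv : ContDiffOn ℝ 1 v U) :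
    ∫ p in convexHull ℝ {P0, P1, P2}, div2 v p
      = Fflux v P0 P1 + Fflux v P1 P2 + Fflux v P2 P0 := by
  set u : ℝ × ℝ := P1 - P0 with hu
  set vv : ℝ × ℝ := P2 - P0 with hvv
  set B : (ℝ×ℝ) →L[ℝ] (ℝ×ℝ) :=
    (ContinuousLinearMap.fst ℝ ℝ ℝ).smulRight u + (ContinuousLinearMap.snd ℝ ℝ ℝ).smulRight vv
    with hB
  have hBapply : ∀ x : ℝ×ℝ, B x = x.1 • u + x.2 • vv := by
    intro x; simp [hB]
  set Φ : ℝ×ℝ → ℝ×ℝ := fun x => P0 + B x with hΦ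
  have hdd : detv u vv = u.1 * vv.2 - u.2 * vv.1 := rfl
  have hdne : detv u vv ≠ 0 := ne_of_gt hd
  -- determinant
  have hdet : B.det = detv u vv := by
    have h1 : LinearMap.toMatrix (Module.Basis.finTwoProd ℝ) (Module.Basis.finTwoProd ℝ)
        (B : (ℝ×ℝ) →ₗ[ℝ] (ℝ×ℝ)) = !![u.1, vv.1; u.2, vv.2] := by
      ext i j
      fin_cases i <;> fin_cases j <;>
        simp [LinearMap.toMatrix_apply, Module.Basis.finTwoProd_zero, Module.Basis.finTwoProd_one,
          Module.Basis.coe_finTwoProd_repr, hBapply]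
    have h2 := LinearMap.det_toMatrix (Module.Basis.finTwoProd ℝ) (B : (ℝ×ℝ) →ₗ[ℝ] (ℝ×ℝ))
    rw [h1] at h2
    have h3 : B.det = LinearMap.det (B : (ℝ×ℝ) →ₗ[ℝ] (ℝ×ℝ)) := rfl
    rw [h3, ← h2, Matrix.det_fin_two_of, hdd]
    ring
  -- injectivity
  have hinj : Set.InjOn Φ Tref := by
    intro x _ y _ hxy
    simp only [hΦ] at hxy
    have h := add_left_cancel hxy
    rw [hBapply, hBapply] at h
    have h1 : x.1 * u.1 + x.2 * vv.1 = y.1 * u.1 + y.2 * vv.1 := by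
      have := congrArg Prod.fst h; simpa [smul_eq_mul] using this
    have h2 : x.1 * u.2 + x.2 * vv.2 = y.1 * u.2 + y.2 * vv.2 := by
      have := congrArg Prod.snd h; simpa [smul_eq_mul] using this
    have e1 : (x.1 - y.1) * detv u vv = 0 := by rw [hdd]; linear_combination vv.2 * h1 - vv.1 * h2
    have e2 : (x.2 - y.2) * detv u vv = 0 := by rw [hdd]; linear_combination u.1 * h2 - u.2 * h1
    have hx1 : x.1 = y.1 := by
      rcases mul_eq_zero.1 e1 with h' | h'
      · linarith
      · exact absurd h' hdne
    have hx2 : x.2 = y.2 := by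
      rcases mul_eq_zero.1 e2 with h' | h'
      · linarith
      · exact absurd h' hdne
    exact Prod.ext hx1 hx2
  -- derivative
  have hderiv : ∀ x ∈ Tref, HasFDerivWithinAt Φ B Tref x := by
    intro x _
    exact ((B.hasFDerivAt).const_add P0).hasFDerivWithinAt
  -- image
  have himg : Φ '' Tref = convexHull ℝ {P0, P1, P2} := by
    rw [← Tref_hull]
    have haff : ∀ p' : ℝ × ℝ, Φ p' = (B : (ℝ×ℝ) →ₗ[ℝ] (ℝ×ℝ)) (p' -ᵥ (0:ℝ×ℝ)) +ᵥ Φ 0 := by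
      intro p'
      simp only [hΦ, vsub_eq_sub, sub_zero, vadd_eq_add, ContinuousLinearMap.coe_coe, map_zero]
      abel
    have him := (AffineMap.mk' Φ (B : (ℝ×ℝ) →ₗ[ℝ] (ℝ×ℝ)) 0 haff).image_convexHull
      ({((0:ℝ),(0:ℝ)), ((1:ℝ),(0:ℝ)), ((0:ℝ),(1:ℝ))} : Set (ℝ×ℝ))
    have hcoe : ⇑(AffineMap.mk' Φ (B : (ℝ×ℝ) →ₗ[ℝ] (ℝ×ℝ)) 0 haff) = Φ := rfl
    rw [hcoe] at him
    rw [him]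
    congr 1
    rw [Set.image_insert_eq, Set.image_insert_eq, Set.image_singleton]
    have i0 : Φ (0,0) = P0 := by
      simp only [hΦ, hBapply]; ext <;> simp
    have i1 : Φ (1,0) = P1 := by
      simp only [hΦ, hBapply]; ext <;> simp [hu]
    have i2 : Φ (0,1) = P2 := by
      simp only [hΦ, hBapply]; ext <;> simp [hvv]
    rw [i0, i1, i2]
  -- change of variables
  have hCoV := integral_image_eq_integral_abs_det_fderiv_smul volume measurableSet_Tref
      hderiv hinj (div2 v)
  rw [himg] at hCoV
  rw [hCoV]
  -- vhat
  set vhat : ℝ×ℝ → ℝ×ℝ := fun x =>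
    (vv.2 * (v (Φ x)).1 + (-vv.1) * (v (Φ x)).2, (-u.2) * (v (Φ x)).1 + u.1 * (v (Φ x)).2)
    with hvhat
  set Uh : Set (ℝ×ℝ) := Φ ⁻¹' U with hUh
  have hΦcont : Continuous Φ := continuous_const.add B.continuous
  have hUhopen : IsOpen Uh := hU.preimage hΦcont
  have hTUh : Tref ⊆ Uh := by
    intro x hx
    exact hTU (by rw [← himg]; exact Set.mem_image_of_mem Φ hx)
  have hΦcd : ContDiffOn ℝ 1 Φ Uh := (contDiff_const.add B.contDiff).contDiffOn
  have hvΦ : ContDiffOn ℝ 1 (fun x => v (Φ x)) Uh :=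
    hv.comp hΦcd (fun x hx => hx)
  have hvhatC1 : ContDiffOn ℝ 1 vhat Uh := by
    apply ContDiffOn.prodMk
    · exact ((contDiffOn_const.mul (contDiff_fst.comp_contDiffOn hvΦ))).add
        ((contDiffOn_const.mul (contDiff_snd.comp_contDiffOn hvΦ)))
    · exact ((contDiffOn_const.mul (contDiff_fst.comp_contDiffOn hvΦ))).add
        ((contDiffOn_const.mul (contDiff_snd.comp_contDiffOn hvΦ)))
  -- divergence identity
  have hdiv : ∀ x ∈ Uh, div2 vhat x = detv u vv * div2 v (Φ x) := by
    intro x hx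
    have hmem : Φ x ∈ U := hx
    have hdv : DifferentiableAt ℝ v (Φ x) :=
      (hv.differentiableOn one_ne_zero).differentiableAt (hU.mem_nhds hmem)
    set D := fderiv ℝ v (Φ x) with hD
    have hDv : HasFDerivAt v D (Φ x) := hdv.hasFDerivAt
    have hΦd : HasFDerivAt Φ B x := (B.hasFDerivAt).const_add P0
    have hcomp : HasFDerivAt (fun x => v (Φ x)) (D.comp B) x := hDv.comp x hΦd
    have h1 : HasFDerivAt (fun s => (vhat s).1)
        (vv.2 • ((ContinuousLinearMap.fst ℝ ℝ ℝ).comp (D.comp B))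
          + (-vv.1) • ((ContinuousLinearMap.snd ℝ ℝ ℝ).comp (D.comp B))) x := by
      have := ((((ContinuousLinearMap.fst ℝ ℝ ℝ).hasFDerivAt.comp x hcomp).const_mul vv.2).add
        (((ContinuousLinearMap.snd ℝ ℝ ℝ).hasFDerivAt.comp x hcomp).const_mul (-vv.1)))
      exact this
    have h2 : HasFDerivAt (fun s => (vhat s).2)
        ((-u.2) • ((ContinuousLinearMap.fst ℝ ℝ ℝ).comp (D.comp B))
          + u.1 • ((ContinuousLinearMap.snd ℝ ℝ ℝ).comp (D.comp B))) x := by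
      have := ((((ContinuousLinearMap.fst ℝ ℝ ℝ).hasFDerivAt.comp x hcomp).const_mul (-u.2)).add
        (((ContinuousLinearMap.snd ℝ ℝ ℝ).hasFDerivAt.comp x hcomp).const_mul u.1))
      exact this
    have hv1 : HasFDerivAt (fun s => (v s).1)
        ((ContinuousLinearMap.fst ℝ ℝ ℝ).comp D) (Φ x) :=
      (ContinuousLinearMap.fst ℝ ℝ ℝ).hasFDerivAt.comp (Φ x) hDv
    have hv2 : HasFDerivAt (fun s => (v s).2)
        ((ContinuousLinearMap.snd ℝ ℝ ℝ).comp D) (Φ x) :=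
      (ContinuousLinearMap.snd ℝ ℝ ℝ).hasFDerivAt.comp (Φ x) hDv
    have hDlin : ∀ q : ℝ×ℝ, D q = q.1 • D (1,0) + q.2 • D (0,1) := by
      intro q
      conv_lhs => rw [prod_decomp q]
      rw [map_add, D.map_smul, D.map_smul]
    unfold div2 pdr pdz
    rw [h1.fderiv, h2.fderiv, hv1.fderiv, hv2.fderiv]
    simp only [ContinuousLinearMap.add_apply, ContinuousLinearMap.coe_smul',
      Pi.smul_apply, ContinuousLinearMap.coe_comp', Function.comp_apply,
      ContinuousLinearMap.coe_fst', ContinuousLinearMap.coe_snd', smul_eq_mul]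
    rw [hBapply, hBapply]
    simp only [one_smul, zero_smul, smul_zero, add_zero, zero_add]
    rw [hDlin u, hDlin vv]
    simp only [Prod.fst_add, Prod.snd_add, Prod.smul_fst, Prod.smul_snd, smul_eq_mul, hdd]
    ring
  -- rewrite the integral
  have hstep : ∫ x in Tref, |B.det| • div2 v (Φ x) = ∫ x in Tref, div2 vhat x := by
    apply setIntegral_congr_fun measurableSet_Tref
    intro x hx
    rw [hdiv x (hTUh hx), hdet, abs_of_pos hd]
    simp [smul_eq_mul]
  rw [hstep, refGreen Uh hUhopen hTUh vhat hvhatC1]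
  -- flux identities
  have hdetvhat : ∀ x (q : ℝ×ℝ), detv (vhat x) q = detv (v (Φ x)) (q.1 • u + q.2 • vv) := by
    intro x q
    simp only [hvhat, detv, Prod.fst_add, Prod.snd_add, Prod.smul_fst, Prod.smul_snd, smul_eq_mul]
    ring
  have hflux1 : Fflux vhat (0,0) (1,0) = Fflux v P0 P1 := by
    unfold Fflux
    apply intervalIntegral.integral_congr
    intro t _
    have hpt : Φ ((0,0) + t • (((1,0) : ℝ×ℝ) - (0,0))) = P0 + t • (P1 - P0) := by
      simp only [hΦ, hBapply]
      ext <;> simp [hu, hvv] <;> ring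
    simp only [hdetvhat]
    rw [hpt]
    congr 1
    ext <;> simp [hu, hvv] <;> ring
  have hflux2 : Fflux vhat (1,0) (0,1) = Fflux v P1 P2 := by
    unfold Fflux
    apply intervalIntegral.integral_congr
    intro t _
    have hpt : Φ ((1,0) + t • (((0,1) : ℝ×ℝ) - (1,0))) = P1 + t • (P2 - P1) := by
      simp only [hΦ, hBapply]
      ext <;> simp [hu, hvv] <;> ring
    simp only [hdetvhat]
    rw [hpt]
    congr 1
    ext <;> simp [hu, hvv] <;> ring
  have hflux3 : Fflux vhat (0,1) (0,0) = Fflux v P2 P0 := by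
    unfold Fflux
    apply intervalIntegral.integral_congr
    intro t _
    have hpt : Φ ((0,1) + t • (((0,0) : ℝ×ℝ) - (0,1))) = P2 + t • (P0 - P2) := by
      simp only [hΦ, hBapply]
      ext <;> simp [hu, hvv] <;> ring
    simp only [hdetvhat]
    rw [hpt]
    congr 1
    ext <;> simp [hu, hvv] <;> ring
  rw [hflux1, hflux2, hflux3]

lemma Fflux_swap (v : ℝ × ℝ → ℝ × ℝ) (A B : ℝ × ℝ) : Fflux v B A = - Fflux v A B := by
  unfold Fflux
  rw [← intervalIntegral.integral_neg]
  have h : ∀ t : ℝ, detv (v (B + t • (A - B))) (A - B)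
      = (fun s : ℝ => - detv (v (A + s • (B - A))) (B - A)) (1 - t) := by
    intro t
    have hpt : B + t • (A - B) = A + (1 - t) • (B - A) := by
      ext <;> simp <;> ring
    rw [hpt]
    simp only [detv]
    have h1 : (A - B).1 = -(B - A).1 := by simp
    have h2 : (A - B).2 = -(B - A).2 := by simp
    rw [h1, h2]; ring
  rw [intervalIntegral.integral_congr (fun t _ => h t)]
  have := intervalIntegral.integral_comp_sub_left (a := (0:ℝ)) (b := 1)
    (fun s : ℝ => - detv (v (A + s • (B - A))) (B - A)) 1
  norm_num at this ⊢
  rw [this]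

lemma green (P0 P1 P2 : ℝ × ℝ)
    (hd : detv (P1 - P0) (P2 - P0) ≠ 0)
    (U : Set (ℝ × ℝ)) (hU : IsOpen U)
    (hTU : convexHull ℝ {P0, P1, P2} ⊆ U)
    (v : ℝ × ℝ → ℝ × ℝ) (hv : ContDiffOn ℝ 1 v U) :
    ∫ p in convexHull ℝ {P0, P1, P2}, div2 v p
      = (if 0 < detv (P1 - P0) (P2 - P0) then (1:ℝ) else -1)
          * (Fflux v P0 P1 + Fflux v P1 P2 + Fflux v P2 P0) := by
  rcases lt_or_gt_of_ne hd with hneg | hpos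
  · have hswap : ({P0, P1, P2} : Set (ℝ × ℝ)) = {P0, P2, P1} := by
      ext x; simp; tauto
    have hd2 : 0 < detv (P2 - P0) (P1 - P0) := by
      simp only [detv] at hneg ⊢
      nlinarith
    rw [hswap]
    rw [green_pos P0 P2 P1 hd2 U hU (by rw [← hswap]; exact hTU) v hv]
    rw [if_neg (by exact not_lt_of_gt hneg)]
    rw [Fflux_swap v P0 P1, Fflux_swap v P1 P2, Fflux_swap v P2 P0]
    ring
  · rw [green_pos P0 P1 P2 hpos U hU hTU v hv, if_pos hpos]; ring

lemma psi_flux_off (l : Fin 3 → (ℝ × ℝ) →ᵃ[ℝ] ℝ) (N : Fin 3 → ℝ × ℝ)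
    (hl : ∀ a b : Fin 3, l a (N b) = if a = b then 1 else 0) (a b : Fin 3) (hab : b ≠ a) :
    Fflux (psiE (l (a+1)) (l (a+2)) (N (a+1)) (N (a+2))) (N (b+1)) (N (b+2)) = 0 := by
  obtain ⟨c1, c2, hrep⟩ := psi_repr (l (a+1)) (l (a+2)) (N (a+1)) (N (a+2))
  rw [hrep]
  rw [Fflux_pair (fun p => c1 * (l (a+2)) p) (fun p => c2 * (l (a+1)) p)
    (continuous_const.mul (affine_contDiff (l (a+2))).continuous)
    (continuous_const.mul (affine_contDiff (l (a+1))).continuous)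
    (Kvec (l (a+1))) (Kvec (l (a+2))) (N (b+1)) (N (b+2))]
  have hLb : ∀ m : Fin 3, (l m).linear (N (b+2) - N (b+1)) = l m (N (b+2)) - l m (N (b+1)) :=
    fun m => ((l m).linearMap_vsub _ _)
  have hbnot1 : b ≠ b + 1 := (by decide : ∀ x : Fin 3, x ≠ x + 1) b
  have hbnot2 : b ≠ b + 2 := (by decide : ∀ x : Fin 3, x ≠ x + 2) b
  have hcase : ∀ x y : Fin 3, y ≠ x → x + 1 = y ∨ x + 2 = y := by decide
  rcases hcase a b hab with h | h
  · have e1 : detv (Kvec (l (a+1))) (N (b+2) - N (b+1)) = 0 := by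
      rw [Kdet, hLb, h, hl, hl, if_neg hbnot2, if_neg hbnot1]
      norm_num
    have e2 : (∫ t in (0:ℝ)..1,
        (fun p => c2 * (l (a+1)) p) (N (b+1) + t • (N (b+2) - N (b+1)))) = 0 := by
      rw [intervalIntegral.integral_congr (g := fun _ : ℝ => (0:ℝ)) (fun tt _ => by
        simp only []
        rw [affine_line, h, hl, hl, if_neg hbnot2, if_neg hbnot1]
        ring)]
      simp
    rw [e1, e2]
    ring
  · have e1 : detv (Kvec (l (a+2))) (N (b+2) - N (b+1)) = 0 := by
      rw [Kdet, hLb, h, hl, hl, if_neg hbnot2, if_neg hbnot1]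
      norm_num
    have e2 : (∫ t in (0:ℝ)..1,
        (fun p => c1 * (l (a+2)) p) (N (b+1) + t • (N (b+2) - N (b+1)))) = 0 := by
      rw [intervalIntegral.integral_congr (g := fun _ : ℝ => (0:ℝ)) (fun tt _ => by
        simp only []
        rw [affine_line, h, hl, hl, if_neg hbnot2, if_neg hbnot1]
        ring)]
      simp
    rw [e1, e2]
    ring

lemma normal_decomp (nn tt : ℝ × ℝ) (hperp : dot2 nn tt = 0) (hunit : dot2 nn nn = 1)
    (htne : tt ≠ 0) :
    ∃ σ : ℝ, σ * σ = 1 ∧ ∀ (v : ℝ × ℝ → ℝ × ℝ) (A B : ℝ × ℝ), B - A = tt →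
      lineIntegral (fun p => dot2 (v p) nn) A B = σ * Fflux v A B := by
  unfold dot2 at hperp hunit
  have hq0 : 0 ≤ tt.1 * tt.1 + tt.2 * tt.2 := by nlinarith [sq_nonneg tt.1, sq_nonneg tt.2]
  have hqne : tt.1 * tt.1 + tt.2 * tt.2 ≠ 0 := by
    intro h
    apply htne
    have h1 : tt.1 = 0 := by nlinarith [sq_nonneg tt.1, sq_nonneg tt.2]
    have h2 : tt.2 = 0 := by nlinarith [sq_nonneg tt.1, sq_nonneg tt.2]
    exact Prod.ext h1 h2
  have hq : 0 < tt.1 * tt.1 + tt.2 * tt.2 := lt_of_le_of_ne hq0 (Ne.symm hqne)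
  set q : ℝ := tt.1 * tt.1 + tt.2 * tt.2 with hqdef
  set s : ℝ := (nn.1 * tt.2 - nn.2 * tt.1) / q with hsdef
  have hn1 : nn.1 = s * tt.2 := by
    rw [hsdef]
    field_simp
    linear_combination tt.1 * hperp
  have hn2 : nn.2 = -(s * tt.1) := by
    rw [hsdef]
    field_simp
    linear_combination tt.2 * hperp
  have hs2 : s * s * q = 1 := by
    rw [hn1, hn2] at hunit
    linear_combination hunit
  refine ⟨Real.sqrt (dot2 tt tt) * s, ?_, ?_⟩
  · have hsq : Real.sqrt (dot2 tt tt) * Real.sqrt (dot2 tt tt) = q := by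
      rw [show dot2 tt tt = q from rfl]
      exact Real.mul_self_sqrt hq0
    calc Real.sqrt (dot2 tt tt) * s * (Real.sqrt (dot2 tt tt) * s)
        = (Real.sqrt (dot2 tt tt) * Real.sqrt (dot2 tt tt)) * (s * s) := by ring
      _ = q * (s * s) := by rw [hsq]
      _ = 1 := by linear_combination hs2
  · intro v A B hBA
    unfold lineIntegral Fflux
    rw [hBA]
    have hpt : ∀ t : ℝ, dot2 (v (A + t • tt)) nn
        = s * detv (v (A + t • tt)) tt := by
      intro t
      unfold dot2 detv
      rw [hn1, hn2]
      ring
    rw [intervalIntegral.integral_congr (fun t _ => hpt t)]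
    rw [intervalIntegral.integral_const_mul]
    ring

lemma Fflux_three (c0 c1 c2 : ℝ) (F0 F1 F2 : ℝ × ℝ → ℝ × ℝ)
    (h0 : Continuous F0) (h1 : Continuous F1) (h2 : Continuous F2) (A B : ℝ × ℝ) :
    Fflux (fun s => c0 • F0 s + c1 • F1 s + c2 • F2 s) A B
      = c0 * Fflux F0 A B + c1 * Fflux F1 A B + c2 * Fflux F2 A B := by
  unfold Fflux
  have hpt : ∀ t : ℝ, detv ((fun s => c0 • F0 s + c1 • F1 s + c2 • F2 s) (A + t • (B - A))) (B - A)
      = c0 * detv (F0 (A + t • (B - A))) (B - A) + c1 * detv (F1 (A + t • (B - A))) (B - A)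
        + c2 * detv (F2 (A + t • (B - A))) (B - A) := by
    intro t
    simp only [detv, Prod.fst_add, Prod.snd_add, Prod.smul_fst, Prod.smul_snd, smul_eq_mul]
    ring
  rw [intervalIntegral.integral_congr (fun t _ => hpt t)]
  have hline : Continuous (fun t : ℝ => A + t • (B - A)) := by fun_prop
  have hint : ∀ (F : ℝ × ℝ → ℝ × ℝ) (c : ℝ), Continuous F →
      IntervalIntegrable (fun t : ℝ => c * detv (F (A + t • (B - A))) (B - A)) volume 0 1 := by
    intro F c hF
    apply Continuous.intervalIntegrable
    unfold detv
    fun_prop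
  rw [intervalIntegral.integral_add ((hint F0 c0 h0).add (hint F1 c1 h1)) (hint F2 c2 h2),
    intervalIntegral.integral_add (hint F0 c0 h0) (hint F1 c1 h1),
    intervalIntegral.integral_const_mul, intervalIntegral.integral_const_mul,
    intervalIntegral.integral_const_mul]

/-- The local (modified Raviart–Thomas) interpolant
`I_T w = Σ_a (∫_{E_a} w · n_a ds) ψ_{E_a}` preserves the mean divergence:
`∫_T div(I_T w) = ∫_T div w` for every `C¹` field `w` on a neighborhood of the closure
of `T`. -/
theorem local_interpolant_preserves_mean_divergence
    (N : Fin 3 → ℝ × ℝ) (hind : AffineIndependent ℝ N)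
    (l : Fin 3 → (ℝ × ℝ) →ᵃ[ℝ] ℝ)
    (hl : ∀ a b : Fin 3, l a (N b) = if a = b then 1 else 0)
    (hax : ∀ a, 0 ≤ (N a).1)
    (n : Fin 3 → ℝ × ℝ)
    (hperp : ∀ a, dot2 (n a) (N (a + 2) - N (a + 1)) = 0)
    (hunit : ∀ a, dot2 (n a) (n a) = 1)
    (hnorm : ∀ a, lineIntegral
        (fun p => dot2 (psiE (l (a + 1)) (l (a + 2)) (N (a + 1)) (N (a + 2)) p) (n a))
        (N (a + 1)) (N (a + 2)) = 1)
    (U : Set (ℝ × ℝ)) (hU : IsOpen U) (hTU : convexHull ℝ (Set.range N) ⊆ U)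
    (w : ℝ × ℝ → ℝ × ℝ) (hw : ContDiffOn ℝ 1 w U) :
    ∫ p in convexHull ℝ (Set.range N),
        div2 (fun s => ∑ a : Fin 3,
          (lineIntegral (fun t => dot2 (w t) (n a)) (N (a + 1)) (N (a + 2))) •
            psiE (l (a + 1)) (l (a + 2)) (N (a + 1)) (N (a + 2)) s) p
      = ∫ p in convexHull ℝ (Set.range N), div2 w p := by
  -- Fin 3 index facts
  have r01 : ((0:Fin 3) + 1) = 1 := by decide
  have r02 : ((0:Fin 3) + 2) = 2 := by decide
  have r11 : ((1:Fin 3) + 1) = 2 := by decide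
  have r12 : ((1:Fin 3) + 2) = 0 := by decide
  have r21 : ((2:Fin 3) + 1) = 0 := by decide
  have r22 : ((2:Fin 3) + 2) = 1 := by decide
  -- range
  have hrange : Set.range N = {N 0, N 1, N 2} := by
    ext x
    constructor
    · rintro ⟨i, rfl⟩; fin_cases i <;> simp
    · intro hx
      rcases hx with rfl | rfl | rfl
      exacts [⟨0, rfl⟩, ⟨1, rfl⟩, ⟨2, rfl⟩]
  rw [hrange] at hTU ⊢
  -- nondegeneracy
  have hd : detv (N 1 - N 0) (N 2 - N 0) ≠ 0 := by
    intro hzero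
    unfold detv at hzero
    have hLu : (l 1).linear (N 1 - N 0) = 1 := by
      have h := (l 1).linearMap_vsub (N 1) (N 0)
      rw [hl 1 1, hl 1 0] at h
      simpa using h
    have hLv : (l 1).linear (N 2 - N 0) = 0 := by
      have h := (l 1).linearMap_vsub (N 2) (N 0)
      rw [hl 1 2, hl 1 0] at h
      simpa using h
    have hL2v : (l 2).linear (N 2 - N 0) = 1 := by
      have h := (l 2).linearMap_vsub (N 2) (N 0)
      rw [hl 2 2, hl 2 0] at h
      simpa using h
    have hzero' : ((N 1).1 - (N 0).1) * ((N 2).2 - (N 0).2)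
        - ((N 1).2 - (N 0).2) * ((N 2).1 - (N 0).1) = 0 := by
      simp only [Prod.fst_sub, Prod.snd_sub] at hzero
      linear_combination hzero
    have hc1 : (N 2 - N 0).2 • (N 1 - N 0) - (N 1 - N 0).2 • (N 2 - N 0) = (0 : ℝ × ℝ) := by
      apply Prod.ext
      · simp only [Prod.fst_sub, Prod.snd_sub, Prod.smul_fst, Prod.smul_snd, smul_eq_mul,
          Prod.fst_zero, Prod.snd_zero]
        linear_combination hzero'
      · simp only [Prod.fst_sub, Prod.snd_sub, Prod.smul_fst, Prod.smul_snd, smul_eq_mul,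
          Prod.fst_zero, Prod.snd_zero]
        ring
    have hc2 : (N 2 - N 0).1 • (N 1 - N 0) - (N 1 - N 0).1 • (N 2 - N 0) = (0 : ℝ × ℝ) := by
      apply Prod.ext
      · simp only [Prod.fst_sub, Prod.snd_sub, Prod.smul_fst, Prod.smul_snd, smul_eq_mul,
          Prod.fst_zero, Prod.snd_zero]
        ring
      · simp only [Prod.fst_sub, Prod.snd_sub, Prod.smul_fst, Prod.smul_snd, smul_eq_mul,
          Prod.fst_zero, Prod.snd_zero]
        linear_combination -hzero'

    have e1 : (N 2 - N 0).2 = 0 := by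
      have h := congrArg (l 1).linear hc1
      rw [map_sub, LinearMap.map_smul, LinearMap.map_smul, map_zero, smul_eq_mul,
        smul_eq_mul] at h
      rw [hLu, hLv] at h
      linarith
    have e2 : (N 2 - N 0).1 = 0 := by
      have h := congrArg (l 1).linear hc2
      rw [map_sub, LinearMap.map_smul, LinearMap.map_smul, map_zero, smul_eq_mul,
        smul_eq_mul] at h
      rw [hLu, hLv] at h
      linarith
    have hvv0 : N 2 - N 0 = (0 : ℝ × ℝ) := Prod.ext e2 e1
    rw [hvv0, map_zero] at hL2v
    norm_num at hL2v
  -- tangents nonzero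
  have htne : ∀ a : Fin 3, N (a + 2) - N (a + 1) ≠ 0 := by
    intro a h
    have h2 := (l (a+1)).linearMap_vsub (N (a+2)) (N (a+1))
    rw [hl (a+1) (a+2), hl (a+1) (a+1)] at h2
    rw [if_pos rfl, if_neg ((by decide : ∀ x : Fin 3, x + 1 ≠ x + 2) a)] at h2
    rw [show (N (a+2) -ᵥ N (a+1)) = N (a+2) - N (a+1) from rfl, h, map_zero] at h2
    norm_num at h2
  -- instantiate per-edge data
  have hperp0 := hperp 0
  have hperp1 := hperp 1
  have hperp2 := hperp 2
  simp only [r01, r02] at hperp0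
  simp only [r11, r12] at hperp1
  simp only [r21, r22] at hperp2
  have htne0 := htne 0
  have htne1 := htne 1
  have htne2 := htne 2
  simp only [r01, r02] at htne0
  simp only [r11, r12] at htne1
  simp only [r21, r22] at htne2
  obtain ⟨σ0, hσ0, hdec0⟩ := normal_decomp (n 0) (N 2 - N 1) hperp0 (hunit 0) htne0
  obtain ⟨σ1, hσ1, hdec1⟩ := normal_decomp (n 1) (N 0 - N 2) hperp1 (hunit 1) htne1
  obtain ⟨σ2, hσ2, hdec2⟩ := normal_decomp (n 2) (N 1 - N 0) hperp2 (hunit 2) htne2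
  have hnorm0 := hnorm 0
  have hnorm1 := hnorm 1
  have hnorm2 := hnorm 2
  simp only [r01, r02] at hnorm0
  simp only [r11, r12] at hnorm1
  simp only [r21, r22] at hnorm2
  rw [hdec0 (psiE (l 1) (l 2) (N 1) (N 2)) (N 1) (N 2) rfl] at hnorm0
  rw [hdec1 (psiE (l 2) (l 0) (N 2) (N 0)) (N 2) (N 0) rfl] at hnorm1
  rw [hdec2 (psiE (l 0) (l 1) (N 0) (N 1)) (N 0) (N 1) rfl] at hnorm2
  have hc0 := hdec0 w (N 1) (N 2) rfl
  have hc1w := hdec1 w (N 2) (N 0) rfl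
  have hc2w := hdec2 w (N 0) (N 1) rfl
  -- rewrite the interpolant as an explicit three-term sum
  have hinteq : (fun s => ∑ a : Fin 3,
      (lineIntegral (fun t => dot2 (w t) (n a)) (N (a + 1)) (N (a + 2))) •
        psiE (l (a + 1)) (l (a + 2)) (N (a + 1)) (N (a + 2)) s)
    = fun s =>
        (lineIntegral (fun t => dot2 (w t) (n 0)) (N 1) (N 2)) • psiE (l 1) (l 2) (N 1) (N 2) s
      + (lineIntegral (fun t => dot2 (w t) (n 1)) (N 2) (N 0)) • psiE (l 2) (l 0) (N 2) (N 0) s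
      + (lineIntegral (fun t => dot2 (w t) (n 2)) (N 0) (N 1)) • psiE (l 0) (l 1) (N 0) (N 1) s := by
    funext s
    rw [Fin.sum_univ_three]
    simp only [r01, r02, r11, r12, r21, r22]
  rw [hinteq]
  set c0 : ℝ := lineIntegral (fun t => dot2 (w t) (n 0)) (N 1) (N 2) with hc0def
  set c1 : ℝ := lineIntegral (fun t => dot2 (w t) (n 1)) (N 2) (N 0) with hc1def
  set c2 : ℝ := lineIntegral (fun t => dot2 (w t) (n 2)) (N 0) (N 1) with hc2def
  have hψ0c := psiE_contDiff (l 1) (l 2) (N 1) (N 2)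
  have hψ1c := psiE_contDiff (l 2) (l 0) (N 2) (N 0)
  have hψ2c := psiE_contDiff (l 0) (l 1) (N 0) (N 1)
  have hV : ContDiff ℝ 1 (fun s => c0 • psiE (l 1) (l 2) (N 1) (N 2) s
      + c1 • psiE (l 2) (l 0) (N 2) (N 0) s + c2 • psiE (l 0) (l 1) (N 0) (N 1) s) :=
    (((contDiff_const (c := c0)).smul hψ0c).add ((contDiff_const (c := c1)).smul hψ1c)).add ((contDiff_const (c := c2)).smul hψ2c)
  rw [green (N 0) (N 1) (N 2) hd Set.univ isOpen_univ (Set.subset_univ _) _ hV.contDiffOn]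
  rw [green (N 0) (N 1) (N 2) hd U hU hTU w hw]
  set eps : ℝ := (if 0 < detv (N 1 - N 0) (N 2 - N 0) then (1:ℝ) else -1) with hepsdef
  have hFV : ∀ A B : ℝ × ℝ, Fflux (fun s => c0 • psiE (l 1) (l 2) (N 1) (N 2) s
      + c1 • psiE (l 2) (l 0) (N 2) (N 0) s + c2 • psiE (l 0) (l 1) (N 0) (N 1) s) A B
      = c0 * Fflux (psiE (l 1) (l 2) (N 1) (N 2)) A B
        + c1 * Fflux (psiE (l 2) (l 0) (N 2) (N 0)) A B
        + c2 * Fflux (psiE (l 0) (l 1) (N 0) (N 1)) A B :=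
    fun A B => Fflux_three c0 c1 c2 _ _ _ hψ0c.continuous hψ1c.continuous hψ2c.continuous A B
  rw [hFV (N 0) (N 1), hFV (N 1) (N 2), hFV (N 2) (N 0)]
  have off0_01 : Fflux (psiE (l 1) (l 2) (N 1) (N 2)) (N 0) (N 1) = 0 := by
    have h := psi_flux_off l N hl 0 2 (by decide)
    simpa only [r01, r02, r21, r22] using h
  have off1_01 : Fflux (psiE (l 2) (l 0) (N 2) (N 0)) (N 0) (N 1) = 0 := by
    have h := psi_flux_off l N hl 1 2 (by decide)
    simpa only [r11, r12, r21, r22] using h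
  have off1_12 : Fflux (psiE (l 2) (l 0) (N 2) (N 0)) (N 1) (N 2) = 0 := by
    have h := psi_flux_off l N hl 1 0 (by decide)
    simpa only [r11, r12, r01, r02] using h
  have off2_12 : Fflux (psiE (l 0) (l 1) (N 0) (N 1)) (N 1) (N 2) = 0 := by
    have h := psi_flux_off l N hl 2 0 (by decide)
    simpa only [r21, r22, r01, r02] using h
  have off0_20 : Fflux (psiE (l 1) (l 2) (N 1) (N 2)) (N 2) (N 0) = 0 := by
    have h := psi_flux_off l N hl 0 1 (by decide)
    simpa only [r01, r02, r11, r12] using h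
  have off2_20 : Fflux (psiE (l 0) (l 1) (N 0) (N 1)) (N 2) (N 0) = 0 := by
    have h := psi_flux_off l N hl 2 1 (by decide)
    simpa only [r21, r22, r11, r12] using h
  rw [off0_01, off1_01, off1_12, off2_12, off0_20, off2_20, hc0, hc1w, hc2w]
  linear_combination (eps * Fflux w (N 1) (N 2)) * hnorm0
    + (eps * Fflux w (N 2) (N 0)) * hnorm1 + (eps * Fflux w (N 0) (N 1)) * hnorm2
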